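/- Let X, Y be Polish spaces, Γ : X → Set Y a multifunction with closed nonempty values such that {x : Γ(x) ∩ U ≠ ∅} is Borel for every open U ⊆ Y. Then there exists a Borel function s : X → Y with s(x) ∈ Γ(x) for all x. -/

import Mathlib

open TopologicalSpace Metric Set

/-- Kuratowski–Ryll-Nardzewski measurable selection: a closed-nonempty-valued
multifunction between Polish spaces that is Borel-measurable (preimages of open
sets under the "hits" map are Borel) admits a Borel selector. -/
theorem stmt7 {X Y : Type*}
    [TopologicalSpace X] [PolishSpace X] [MeasurableSpace X] [BorelSpace X]
    [TopologicalSpace Y] [PolishSpace Y] [MeasurableSpace Y] [BorelSpace Y]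
    (Γ : X → Set Y)
    (hne : ∀ x, (Γ x).Nonempty) (hcl : ∀ x, IsClosed (Γ x))
    (hmeas : ∀ U : Set Y, IsOpen U → MeasurableSet {x : X | (Γ x ∩ U).Nonempty}) :
    ∃ s : X → Y, Measurable s ∧ ∀ x, s x ∈ Γ x := by
  classical
  rcases isEmpty_or_nonempty X with hX | hX
  · exact ⟨fun x => (hne x).choose, measurable_of_empty _, fun x => (hne x).choose_spec⟩
  letI := upgradeIsCompletelyMetrizable Y
  haveI : Nonempty Y := ⟨(hne (Classical.arbitrary X)).choose⟩
  set y : ℕ → Y := denseSeq Y with hy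
  have hdense : DenseRange y := denseRange_denseSeq Y
  -- radius
  set r : ℕ → ℝ := fun n => (1 / 2 : ℝ) ^ n with hr
  have hrpos : ∀ n, 0 < r n := fun n => by positivity
  -- the recursively defined index function
  let F : ℕ → X → ℕ := fun n => Nat.rec
    (fun x => if h : ∃ k, (Γ x ∩ ball (y k) (r 0)).Nonempty then Nat.find h else 0)
    (fun n Fn x => if h : ∃ k, (Γ x ∩ (ball (y k) (r (n + 1)) ∩ ball (y (Fn x)) (r n))).Nonempty
      then Nat.find h else 0) n
  have hex0 : ∀ x, ∃ k, (Γ x ∩ ball (y k) (r 0)).Nonempty := by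
    intro x
    obtain ⟨z, hz⟩ := hne x
    obtain ⟨k, hk⟩ := hdense.exists_dist_lt z (hrpos 0)
    exact ⟨k, z, hz, by simpa [dist_comm] using hk⟩
  -- existence of suitable indices, and the invariant
  have key : ∀ n x, (Γ x ∩ ball (y (F n x)) (r n)).Nonempty := by
    intro n
    induction n with
    | zero =>
      intro x
      rw [show F 0 x = Nat.find (hex0 x) from dif_pos _]
      exact Nat.find_spec (hex0 x)
    | succ n ih =>
      intro x
      obtain ⟨z, hzΓ, hzb⟩ := ih x
      have hex : ∃ k, (Γ x ∩ (ball (y k) (r (n + 1)) ∩ ball (y (F n x)) (r n))).Nonempty := by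
        obtain ⟨k, hk⟩ := hdense.exists_dist_lt z (hrpos (n + 1))
        exact ⟨k, z, hzΓ, by simpa [dist_comm] using hk, hzb⟩
      have hFdef : F (n + 1) x = Nat.find hex := dif_pos _
      have := Nat.find_spec hex
      rw [← hFdef] at this
      exact this.mono (inter_subset_inter_right _ (inter_subset_left))
  -- existence lemma used for the dite at successor steps, phrased uniformly
  have hex : ∀ n x, ∃ k, (Γ x ∩ (ball (y k) (r (n + 1)) ∩ ball (y (F n x)) (r n))).Nonempty := by
    intro n x
    obtain ⟨z, hzΓ, hzb⟩ := key n x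
    obtain ⟨k, hk⟩ := hdense.exists_dist_lt z (hrpos (n + 1))
    exact ⟨k, z, hzΓ, by simpa [dist_comm] using hk, hzb⟩
  have hF0 : ∀ x, F 0 x = Nat.find (hex0 x) := fun x => dif_pos _
  have hFsucc : ∀ n x, F (n + 1) x = Nat.find (hex n x) := fun n x => dif_pos _
  -- measurability of F n
  have hFmeas : ∀ n, Measurable (F n) := by
    intro n
    induction n with
    | zero =>
      have : (fun x => F 0 x) = fun x => Nat.find (hex0 x) := funext hF0
      rw [show F 0 = fun x => Nat.find (hex0 x) from funext hF0]
      exact measurable_find hex0 fun k => hmeas _ isOpen_ball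
    | succ n ih =>
      rw [show F (n + 1) = fun x => Nat.find (hex n x) from funext (hFsucc n)]
      refine measurable_find (hex n) fun k => ?_
      have : {x : X | (Γ x ∩ (ball (y k) (r (n + 1)) ∩ ball (y (F n x)) (r n))).Nonempty}
          = ⋃ j, {x | F n x = j} ∩
            {x | (Γ x ∩ (ball (y k) (r (n + 1)) ∩ ball (y j) (r n))).Nonempty} := by
        ext x
        simp only [mem_iUnion, mem_inter_iff, mem_setOf_eq]
        exact ⟨fun h => ⟨F n x, rfl, h⟩, fun ⟨j, hj, h⟩ => by rw [hj]; exact h⟩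
      rw [this]
      exact MeasurableSet.iUnion fun j =>
        ((ih (measurableSet_singleton j)).inter (hmeas _ (isOpen_ball.inter isOpen_ball)))
  -- the approximating sequence
  set g : ℕ → X → Y := fun n x => y (F n x) with hg
  have hgmeas : ∀ n, Measurable (g n) := fun n => measurable_from_nat.comp (hFmeas n)
  -- consecutive distances
  have hstep : ∀ n x, dist (g (n + 1) x) (g n x) ≤ 3 * r (n + 1) := by
    intro n x
    obtain ⟨z, _, hz1, hz2⟩ : (Γ x ∩ (ball (y (F (n + 1) x)) (r (n + 1))
        ∩ ball (y (F n x)) (r n))).Nonempty := by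
      have := Nat.find_spec (hex n x)
      rwa [← hFsucc n x] at this
    have : dist (g (n + 1) x) (g n x) ≤ dist (g (n + 1) x) z + dist z (g n x) := dist_triangle _ _ _
    have h1 : dist (g (n + 1) x) z < r (n + 1) := by rw [dist_comm]; exact mem_ball.mp hz1
    have h2 : dist z (g n x) < r n := mem_ball.mp hz2
    have hrn : r n = 2 * r (n + 1) := by
      simp only [hr, pow_succ]; ring
    nlinarith [hrpos (n + 1)]
  -- Cauchy, hence convergent
  have hcauchy : ∀ x, CauchySeq fun n => g n x := by
    intro x
    apply cauchySeq_of_le_geometric (1 / 2 : ℝ) (3 * (1 / 2)) (by norm_num)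
    intro n
    have := hstep n x
    calc dist (g n x) (g (n + 1) x) = dist (g (n + 1) x) (g n x) := dist_comm _ _
      _ ≤ 3 * r (n + 1) := this
      _ = 3 * (1 / 2) * (1 / 2 : ℝ) ^ n := by simp only [hr, pow_succ]; ring
  choose s hs using fun x => cauchySeq_tendsto_of_complete (hcauchy x)
  refine ⟨s, ?_, ?_⟩
  · exact measurable_of_tendsto_metrizable hgmeas
      (tendsto_pi_nhds.mpr fun x => hs x)
  · intro x
    -- points of Γ x close to g n x
    choose z hzΓ hzb using fun n => key n x
    have hzt : Filter.Tendsto z Filter.atTop (nhds (s x)) := by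
      have hd : Filter.Tendsto (fun n => dist (z n) (g n x)) Filter.atTop (nhds 0) := by
        have h0 : Filter.Tendsto r Filter.atTop (nhds 0) :=
          tendsto_pow_atTop_nhds_zero_of_lt_one (by norm_num) (by norm_num)
        refine squeeze_zero (fun n => dist_nonneg) (fun n => ?_) h0
        exact le_of_lt (mem_ball.mp (hzb n))
      have := (hs x).comp (Filter.tendsto_id (α := ℕ))
      exact (tendsto_iff_dist_tendsto_zero (f := z) (x := Filter.atTop) (a := s x)).mpr <| by
        refine squeeze_zero (fun n => dist_nonneg) (fun n => dist_triangle (z n) (g n x) (s x)) ?_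
        have hgx : Filter.Tendsto (fun n => dist (g n x) (s x)) Filter.atTop (nhds 0) :=
          (tendsto_iff_dist_tendsto_zero).mp (hs x)
        simpa using hd.add hgx
    exact (hcl x).mem_of_tendsto hzt (Filter.Eventually.of_forall hzΓ)
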